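/- arXiv:math/0305335 — 2 statements merged into one kernel-verified Lean document; each statement's English description precedes it below -/
import Mathlib

section
/- Let V be a steplike potential with steps V₊, V₋ and threshold x_M. Let z ∈ ℝ with z > V₊ and z > V₋, and set r₊ = √(z − V₊) > 0 and r₋ = √(z − V₋) > 0. Suppose u and v are solutions of −u'' + V u = z u, and there are constants T₋, R₋, T₊, R₊ ∈ ℂ with: u(x) = T₋ e^{−i r₋ x} for all x ≤ −x_M and u(x) = e^{−i r₊ x} + R₋ e^{i r₊ x} for all x ≥ x_M; v(x) = e^{i r₋ x} + R₊ e^{−i r₋ x} for all x ≤ −x_M and v(x) = T₊ e^{i r₊ x} for all x ≥ x_M. Then conj(T₋) · R₊ + conj(R₋) · T₋ = 0, where conj denotes complex conjugation. -/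
open Complex MeasureTheory
open scoped Classical

/-- `u` is a solution of `-u'' + V u = z u`: `u` is differentiable with continuous
derivative, and the derivative satisfies the integrated form of the ODE. -/
def IsSolution (V : ℝ → ℝ) (z : ℂ) (u : ℝ → ℂ) : Prop :=
  Differentiable ℝ u ∧ Continuous (deriv u) ∧
    ∀ x : ℝ, deriv u x = deriv u 0 + ∫ t in (0:ℝ)..x, ((V t : ℂ) - z) * u t

/-- Triangle Fubini: swap the order of integration over `{a < t ≤ x ≤ b}`. -/
lemma triangle_swap {a b : ℝ} (hab : a ≤ b) {F h : ℝ → ℂ} (hF : Continuous F)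
    (hh : IntegrableOn h (Set.Ioc a b)) :
    ∫ x in Set.Ioc a b, F x * (∫ t in Set.Ioc a x, h t)
      = ∫ t in Set.Ioc a b, (∫ x in Set.Icc t b, F x) * h t := by
  set μ := volume.restrict (Set.Ioc a b) with hμ
  have hK : Integrable (Function.uncurry fun x t => F x * (Set.Ioc a x).indicator h t)
      (μ.prod μ) := by
    have h1 : Integrable (fun p : ℝ × ℝ => F p.1 * h p.2) (μ.prod μ) :=
      (hF.integrableOn_Ioc).mul_prod hh
    have h2 : MeasurableSet {p : ℝ × ℝ | a < p.2 ∧ p.2 ≤ p.1} :=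
      ((measurableSet_lt measurable_const measurable_snd).inter
        (measurableSet_le measurable_snd measurable_fst))
    have h3 : (Function.uncurry fun x t => F x * (Set.Ioc a x).indicator h t)
        = {p : ℝ × ℝ | a < p.2 ∧ p.2 ≤ p.1}.indicator (fun p => F p.1 * h p.2) := by
      funext p
      by_cases hp : a < p.2 ∧ p.2 ≤ p.1
      · simp [Function.uncurry, Set.indicator, Set.mem_Ioc, Set.mem_setOf_eq, hp.1, hp.2]
      · simp only [Function.uncurry, Set.indicator, Set.mem_Ioc, Set.mem_setOf_eq]
        rw [if_neg hp, if_neg hp, mul_zero]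
    rw [h3]
    exact h1.indicator h2
  have swap := integral_integral_swap hK
  calc ∫ x in Set.Ioc a b, F x * (∫ t in Set.Ioc a x, h t)
      = ∫ x in Set.Ioc a b, ∫ t in Set.Ioc a b, F x * (Set.Ioc a x).indicator h t := by
        refine setIntegral_congr_fun measurableSet_Ioc (fun x hx => ?_)
        rw [integral_const_mul, integral_indicator measurableSet_Ioc,
          Measure.restrict_restrict measurableSet_Ioc, Set.Ioc_inter_Ioc, sup_idem,
          min_eq_left hx.2]
    _ = ∫ t in Set.Ioc a b, ∫ x in Set.Ioc a b, F x * (Set.Ioc a x).indicator h t := swap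
    _ = ∫ t in Set.Ioc a b, (∫ x in Set.Icc t b, F x) * h t := by
        refine setIntegral_congr_fun measurableSet_Ioc (fun t ht => ?_)
        have hpt : ∀ x : ℝ, F x * (Set.Ioc a x).indicator h t
            = (Set.Ici t).indicator (fun x => F x * h t) x := by
          intro x
          simp only [Set.indicator_apply, Set.mem_Ioc, Set.mem_Ici]
          by_cases hx : t ≤ x
          · rw [if_pos hx, if_pos ⟨ht.1, hx⟩]
          · rw [if_neg hx, if_neg (fun hc => hx hc.2), mul_zero]
        simp_rw [hpt]
        rw [integral_indicator measurableSet_Ici,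
          Measure.restrict_restrict measurableSet_Ici]
        have hset : Set.Ici t ∩ Set.Ioc a b = Set.Icc t b := by
          ext x
          simp only [Set.mem_inter_iff, Set.mem_Ici, Set.mem_Ioc, Set.mem_Icc]
          constructor
          · rintro ⟨h1', _, h3'⟩; exact ⟨h1', h3'⟩
          · rintro ⟨h1', h2'⟩; exact ⟨h1', lt_of_lt_of_le ht.1 h1', h2'⟩
        rw [hset, ← integral_mul_const]

/-- Integration by parts when one factor is only given as an indefinite integral. -/
lemma partsA {a b : ℝ} (hab : a ≤ b) {f F G h : ℝ → ℂ}
    (hfd : ∀ x, HasDerivAt f (F x) x) (hF : Continuous F) (hG : Continuous G)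
    (hrep : ∀ x : ℝ, G x = G a + ∫ t in a..x, h t)
    (hh : ∀ c d : ℝ, IntervalIntegrable h volume c d) :
    f b * G b - f a * G a = ∫ x in a..b, (F x * G x + f x * h x) := by
  have hfc : Continuous f := continuous_iff_continuousAt.2 fun y => (hfd y).continuousAt
  have hΦc : Continuous fun x : ℝ => ∫ t in a..x, h t := by
    have he : (fun x : ℝ => ∫ t in a..x, h t) = fun x => G x - G a := by
      funext x; rw [hrep x]; ring
    rw [he]; exact hG.sub continuous_const
  have hint_fh : IntervalIntegrable (fun x => f x * h x) volume a b :=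
    (hh a b).continuousOn_mul hfc.continuousOn
  have hint_FG : IntervalIntegrable (fun x => F x * G x) volume a b :=
    (hF.mul hG).intervalIntegrable a b
  have hsplit : ∫ x in a..b, (F x * G x + f x * h x)
      = (∫ x in a..b, F x * G x) + ∫ x in a..b, f x * h x :=
    intervalIntegral.integral_add hint_FG hint_fh
  have hFTC : ∫ x in a..b, F x = f b - f a :=
    intervalIntegral.integral_eq_sub_of_hasDerivAt (fun x _ => (hfd x))
      (hF.intervalIntegrable a b)
  have hFG : ∫ x in a..b, F x * G x
      = (f b - f a) * G a + ∫ x in a..b, F x * ∫ t in a..x, h t := by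
    have he : ∀ x ∈ Set.uIcc a b, F x * G x = F x * G a + F x * ∫ t in a..x, h t := by
      intro x _; rw [hrep x]; ring
    rw [intervalIntegral.integral_congr he,
      intervalIntegral.integral_add (g := fun x => F x * ∫ t in a..x, h t)
        ((hF.intervalIntegrable a b).mul_const _)
        ((hF.mul hΦc).intervalIntegrable a b),
      intervalIntegral.integral_mul_const, hFTC]
  have hswap : ∫ x in a..b, (F x * ∫ t in a..x, h t)
      = f b * (∫ t in a..b, h t) - ∫ t in a..b, f t * h t := by
    rw [intervalIntegral.integral_of_le hab,
      setIntegral_congr_fun measurableSet_Ioc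
        (g := fun x => F x * ∫ t in Set.Ioc a x, h t)
        (fun x hx => by rw [intervalIntegral.integral_of_le hx.1.le]),
      triangle_swap hab hF (hh a b).1,
      setIntegral_congr_fun measurableSet_Ioc (g := fun t => f b * h t - f t * h t)
        (fun t ht => by
          rw [integral_Icc_eq_integral_Ioc, ← intervalIntegral.integral_of_le ht.2,
            intervalIntegral.integral_eq_sub_of_hasDerivAt (fun x _ => (hfd x))
              (hF.intervalIntegrable t b)]
          ring),
      integral_sub ((hh a b).1.const_mul (f b)) hint_fh.1,
      integral_const_mul, ← intervalIntegral.integral_of_le hab,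
      ← intervalIntegral.integral_of_le hab]
  rw [hsplit, hFG, hswap, hrep b]
  ring


/-- Conjugation commutes with interval integration. -/
lemma intervalIntegral_conj {f : ℝ → ℂ} {a b : ℝ} :
    (∫ t in a..b, (starRingEnd ℂ) (f t)) = (starRingEnd ℂ) (∫ t in a..b, f t) := by
  simp only [intervalIntegral]
  rw [integral_conj, integral_conj, map_sub]

/-- Constancy of the Wronskian for two solutions of the same Schrödinger-type equation. -/
lemma wronskian_const {w f g F G : ℝ → ℂ} {a b : ℝ} (hab : a ≤ b)
    (hfd : ∀ x, HasDerivAt f (F x) x) (hgd : ∀ x, HasDerivAt g (G x) x)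
    (hFc : Continuous F) (hGc : Continuous G)
    (hFr : ∀ x : ℝ, F x = F a + ∫ t in a..x, w t * f t)
    (hGr : ∀ x : ℝ, G x = G a + ∫ t in a..x, w t * g t)
    (hwf : ∀ c d : ℝ, IntervalIntegrable (fun t => w t * f t) volume c d)
    (hwg : ∀ c d : ℝ, IntervalIntegrable (fun t => w t * g t) volume c d) :
    f b * G b - F b * g b = f a * G a - F a * g a := by
  have h1 := partsA hab hfd hFc hGc hGr hwg
  have h2 := partsA hab hgd hGc hFc hFr hwf
  have h3 : (∫ x in a..b, (F x * G x + f x * (w x * g x)))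
      = ∫ x in a..b, (G x * F x + g x * (w x * f x)) := by
    apply intervalIntegral.integral_congr; intro x _; ring
  linear_combination h1 - h2 + h3

lemma expDeriv (c : ℂ) (x : ℝ) :
    HasDerivAt (fun y : ℝ => Complex.exp (c * y)) (c * Complex.exp (c * x)) x := by
  have h1 : HasDerivAt (fun y : ℝ => (y : ℂ)) 1 x := by
    simpa using (hasDerivAt_id x).ofReal_comp
  have h2 : HasDerivAt (fun y : ℝ => c * (y : ℂ)) c x := by
    simpa using h1.const_mul c
  simpa [mul_comm] using h2.cexp

lemma hasDerivAt_comb (A B c d : ℂ) (x : ℝ) :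
    HasDerivAt (fun y : ℝ => A * Complex.exp (c * y) + B * Complex.exp (d * y))
      (A * (c * Complex.exp (c * x)) + B * (d * Complex.exp (d * x))) x :=
  ((expDeriv c x).const_mul A).add ((expDeriv d x).const_mul B)


theorem conjugate_orthogonality_relation
    (V : ℝ → ℝ) (Vp Vm xM : ℝ)
    (hVmeas : Measurable V) (hVbdd : ∃ C : ℝ, ∀ x : ℝ, |V x| ≤ C)
    (hxM : 0 < xM)
    (hVp : ∀ x : ℝ, xM < x → V x = Vp)
    (hVm : ∀ x : ℝ, x < -xM → V x = Vm)
    (z : ℝ) (hzp : Vp < z) (hzm : Vm < z)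
    (rp rm : ℝ) (hrp : rp = Real.sqrt (z - Vp)) (hrm : rm = Real.sqrt (z - Vm))
    (u v : ℝ → ℂ) (hu : IsSolution V (z : ℂ) u) (hv : IsSolution V (z : ℂ) v)
    (Tm Rm Tp Rp : ℂ)
    (huL : ∀ x : ℝ, x ≤ -xM → u x = Tm * Complex.exp (-(Complex.I * (rm : ℂ) * x)))
    (huR : ∀ x : ℝ, xM ≤ x →
      u x = Complex.exp (-(Complex.I * (rp : ℂ) * x)) + Rm * Complex.exp (Complex.I * (rp : ℂ) * x))
    (hvL : ∀ x : ℝ, x ≤ -xM →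
      v x = Complex.exp (Complex.I * (rm : ℂ) * x) + Rp * Complex.exp (-(Complex.I * (rm : ℂ) * x)))
    (hvR : ∀ x : ℝ, xM ≤ x → v x = Tp * Complex.exp (Complex.I * (rp : ℂ) * x)) :
    (starRingEnd ℂ) Tm * Rp + (starRingEnd ℂ) Rm * Tm = 0 := by
  obtain ⟨C, hC⟩ := hVbdd
  obtain ⟨hud, hudc, hui⟩ := hu
  obtain ⟨hvd, hvdc, hvi⟩ := hv
  have ucont : Continuous u := hud.continuous
  have vcont : Continuous v := hvd.continuous
  set w : ℝ → ℂ := fun t => ((V t : ℂ) - (z : ℂ)) with hw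
  -- integrability of `w`
  have hwint : ∀ c d : ℝ, IntervalIntegrable w volume c d := by
    intro c d
    rw [intervalIntegrable_iff]
    refine Measure.integrableOn_of_bounded (M := C + ‖((z : ℝ) : ℂ)‖) ?_ ?_ ?_
    · exact measure_Ioc_lt_top.ne
    · exact ((Complex.measurable_ofReal.comp hVmeas).sub measurable_const).aestronglyMeasurable
    · filter_upwards with t
      have h1 : ‖w t‖ ≤ ‖((V t : ℝ) : ℂ)‖ + ‖((z : ℝ) : ℂ)‖ := norm_sub_le _ _
      have h2 : ‖((V t : ℝ) : ℂ)‖ = |V t| := by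
        rw [Complex.norm_real, Real.norm_eq_abs]
      calc ‖w t‖ ≤ |V t| + ‖((z : ℝ) : ℂ)‖ := by rw [← h2]; exact h1
        _ ≤ C + ‖((z : ℝ) : ℂ)‖ := add_le_add_left (hC t) _
  have hwmul : ∀ (g : ℝ → ℂ), Continuous g →
      ∀ c d : ℝ, IntervalIntegrable (fun t => w t * g t) volume c d :=
    fun g hg c d => (hwint c d).mul_continuousOn hg.continuousOn
  set a : ℝ := -(xM + 1) with ha_def
  set b : ℝ := xM + 1 with hb_def
  have hab : a ≤ b := by rw [ha_def, hb_def]; linarith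
  have hb1 : xM < b := by rw [hb_def]; linarith
  have ha1 : a < -xM := by rw [ha_def]; linarith
  -- integral representation of derivatives based at `a`
  have hrep : ∀ (g : ℝ → ℂ), Continuous g →
      (∀ x : ℝ, deriv g x = deriv g 0 + ∫ t in (0:ℝ)..x, w t * g t) →
      ∀ x : ℝ, deriv g x = deriv g a + ∫ t in a..x, w t * g t := by
    intro g hgc hg x
    have h3 := intervalIntegral.integral_add_adjacent_intervals
      (hwmul g hgc 0 a) (hwmul g hgc a x)
    rw [hg x, hg a]
    linear_combination -h3
  have repu : ∀ x : ℝ, deriv u x = deriv u a + ∫ t in a..x, w t * u t := hrep u ucont hui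
  have repv : ∀ x : ℝ, deriv v x = deriv v a + ∫ t in a..x, w t * v t := hrep v vcont hvi
  -- the conjugated solution
  set cu : ℝ → ℂ := fun x => (starRingEnd ℂ) (u x) with hcu_def
  set Fc : ℝ → ℂ := fun x => (starRingEnd ℂ) (deriv u x) with hFc_def
  have cucont : Continuous cu := continuous_star.comp ucont
  have hFcc : Continuous Fc := continuous_star.comp hudc
  have hcud : ∀ x, HasDerivAt cu (Fc x) x := by
    intro x
    exact ((hud x).hasDerivAt).star
  have hwconj : ∀ t, (starRingEnd ℂ) (w t) = w t := by
    intro t; simp [hw, Complex.conj_ofReal]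
  have repcu : ∀ x : ℝ, Fc x = Fc a + ∫ t in a..x, w t * cu t := by
    intro x
    have h := congrArg (starRingEnd ℂ) (repu x)
    rw [map_add] at h
    calc Fc x = (starRingEnd ℂ) (deriv u x) := rfl
      _ = (starRingEnd ℂ) (deriv u a) + (starRingEnd ℂ) (∫ t in a..x, w t * u t) := h
      _ = Fc a + ∫ t in a..x, w t * cu t := by
          congr 1
          rw [← intervalIntegral_conj]
          apply intervalIntegral.integral_congr
          intro t _
          show (starRingEnd ℂ) (w t * u t) = w t * cu t
          rw [map_mul, hwconj t]
  -- Wronskian identities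
  have hud' : ∀ x, HasDerivAt u (deriv u x) x := fun x => (hud x).hasDerivAt
  have hvd' : ∀ x, HasDerivAt v (deriv v x) x := fun x => (hvd x).hasDerivAt
  have E2 := wronskian_const hab hud' hvd' hudc hvdc repu repv
    (hwmul u ucont) (hwmul v vcont)
  have E1 := wronskian_const hab hcud hvd' hFcc hvdc repcu repv
    (hwmul cu cucont) (hwmul v vcont)
  -- conjugation of exponentials
  have hce : ∀ (s y : ℝ), (starRingEnd ℂ) (Complex.exp (Complex.I * s * y))
      = Complex.exp ((-(Complex.I * s)) * y) := by
    intro s y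
    rw [← Complex.exp_conj]
    congr 1
    simp [Complex.conj_ofReal]
  have hce' : ∀ (s y : ℝ), (starRingEnd ℂ) (Complex.exp (-(Complex.I * s * y)))
      = Complex.exp ((Complex.I * s) * y) := by
    intro s y
    rw [← Complex.exp_conj]
    congr 1
    simp [Complex.conj_ofReal]
  -- local formulas near b
  set P : ℂ := Complex.I * (rp : ℂ) with hP_def
  set Q : ℂ := Complex.I * (rm : ℂ) with hQ_def
  have huevb : u =ᶠ[nhds b] fun y : ℝ =>
      1 * Complex.exp ((-P) * y) + Rm * Complex.exp (P * y) := by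
    filter_upwards [Ioi_mem_nhds hb1] with y hy
    rw [huR y (le_of_lt hy), one_mul, neg_mul]
  have hvevb : v =ᶠ[nhds b] fun y : ℝ =>
      Tp * Complex.exp (P * y) + 0 * Complex.exp (0 * y) := by
    filter_upwards [Ioi_mem_nhds hb1] with y hy
    rw [hvR y (le_of_lt hy)]
    simp
  have hcuevb : cu =ᶠ[nhds b] fun y : ℝ =>
      1 * Complex.exp (P * y) + (starRingEnd ℂ) Rm * Complex.exp ((-P) * y) := by
    filter_upwards [Ioi_mem_nhds hb1] with y hy
    show (starRingEnd ℂ) (u y) = _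
    rw [huR y (le_of_lt hy), map_add, map_mul, hce' rp y, hce rp y, one_mul]
  have huevA : u =ᶠ[nhds a] fun y : ℝ =>
      Tm * Complex.exp ((-Q) * y) + 0 * Complex.exp (0 * y) := by
    filter_upwards [Iio_mem_nhds ha1] with y hy
    rw [huL y (le_of_lt hy), neg_mul]
    simp
  have hvevA : v =ᶠ[nhds a] fun y : ℝ =>
      1 * Complex.exp (Q * y) + Rp * Complex.exp ((-Q) * y) := by
    filter_upwards [Iio_mem_nhds ha1] with y hy
    rw [hvL y (le_of_lt hy), one_mul, neg_mul]
  have hcuevA : cu =ᶠ[nhds a] fun y : ℝ =>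
      (starRingEnd ℂ) Tm * Complex.exp (Q * y) + 0 * Complex.exp (0 * y) := by
    filter_upwards [Iio_mem_nhds ha1] with y hy
    show (starRingEnd ℂ) (u y) = _
    rw [huL y (le_of_lt hy), map_mul, hce' rm y, hQ_def]
    simp
  -- values and derivatives at the endpoints
  have hu_b := huevb.eq_of_nhds
  have hv_b := hvevb.eq_of_nhds
  have hcu_b := hcuevb.eq_of_nhds
  have hu_a := huevA.eq_of_nhds
  have hv_a := hvevA.eq_of_nhds
  have hcu_a := hcuevA.eq_of_nhds
  have hdu_b : deriv u b = 1 * ((-P) * Complex.exp ((-P) * b)) + Rm * (P * Complex.exp (P * b)) := by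
    rw [huevb.deriv_eq]; exact (hasDerivAt_comb 1 Rm (-P) P b).deriv
  have hdv_b : deriv v b = Tp * (P * Complex.exp (P * b)) + 0 * (0 * Complex.exp (0 * b)) := by
    rw [hvevb.deriv_eq]; exact (hasDerivAt_comb Tp 0 P 0 b).deriv
  have hFc_b : Fc b = 1 * (P * Complex.exp (P * b))
      + (starRingEnd ℂ) Rm * ((-P) * Complex.exp ((-P) * b)) := by
    rw [← (hcud b).deriv, hcuevb.deriv_eq]
    exact (hasDerivAt_comb 1 ((starRingEnd ℂ) Rm) P (-P) b).deriv
  have hdu_a : deriv u a = Tm * ((-Q) * Complex.exp ((-Q) * a)) + 0 * (0 * Complex.exp (0 * a)) := by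
    rw [huevA.deriv_eq]; exact (hasDerivAt_comb Tm 0 (-Q) 0 a).deriv
  have hdv_a : deriv v a = 1 * (Q * Complex.exp (Q * a)) + Rp * ((-Q) * Complex.exp ((-Q) * a)) := by
    rw [hvevA.deriv_eq]; exact (hasDerivAt_comb 1 Rp Q (-Q) a).deriv
  have hFc_a : Fc a = (starRingEnd ℂ) Tm * (Q * Complex.exp (Q * a))
      + 0 * (0 * Complex.exp (0 * a)) := by
    rw [← (hcud a).deriv, hcuevA.deriv_eq]
    exact (hasDerivAt_comb ((starRingEnd ℂ) Tm) 0 Q 0 a).deriv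
  -- exponential products
  have hme : Complex.exp ((-P) * b) * Complex.exp (P * b) = 1 := by
    rw [← Complex.exp_add, show (-P) * (b:ℝ) + P * (b:ℝ) = 0 by ring, Complex.exp_zero]
  have hmf : Complex.exp ((-Q) * a) * Complex.exp (Q * a) = 1 := by
    rw [← Complex.exp_add, show (-Q) * (a:ℝ) + Q * (a:ℝ) = 0 by ring, Complex.exp_zero]
  rw [hu_b, hv_b, hdu_b, hdv_b, hu_a, hv_a, hdu_a, hdv_a] at E2
  rw [hcu_b, hv_b, hFc_b, hdv_b, hcu_a, hv_a, hFc_a, hdv_a] at E1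
  -- extract the two scattering relations
  have h2exp : (2 : ℂ) * (P * Tp) = 2 * (Q * Tm) := by
    linear_combination E2 - 2 * P * Tp * hme + 2 * Q * Tm * hmf
  have h2 : P * Tp = Q * Tm := mul_left_cancel₀ two_ne_zero h2exp
  have h1exp : (2 : ℂ) * (P * Tp * (starRingEnd ℂ) Rm)
      = 2 * (-(Q * (starRingEnd ℂ) Tm * Rp)) := by
    linear_combination E1 - 2 * P * Tp * (starRingEnd ℂ) Rm * hme
      - 2 * Q * (starRingEnd ℂ) Tm * Rp * hmf
  have h1 : P * Tp * (starRingEnd ℂ) Rm = -(Q * (starRingEnd ℂ) Tm * Rp) :=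
    mul_left_cancel₀ two_ne_zero h1exp
  have hQne : Q ≠ 0 := by
    rw [hQ_def]
    refine mul_ne_zero Complex.I_ne_zero (Complex.ofReal_ne_zero.2 ?_)
    rw [hrm]
    exact ne_of_gt (Real.sqrt_pos.mpr (by linarith))
  have hkey : Q * ((starRingEnd ℂ) Tm * Rp + (starRingEnd ℂ) Rm * Tm) = 0 := by
    linear_combination h1 - (starRingEnd ℂ) Rm * h2
  exact (mul_eq_zero.mp hkey).resolve_left hQne
end

section
/- Let V be a steplike potential with steps V₊, V₋ and threshold x_M, let z ∈ ℂ, and let r₊, r₋ ∈ ℂ satisfy r₊² = z − V₊, r₋² = z − V₋, and r₊ ≠ 0. Suppose u₁ and u₂ are solutions of −u'' + V u = z u, and there are constants T₁, R₁, T₂, R₂ ∈ ℂ with: u₁(x) = T₁ e^{−i r₋ x} for all x ≤ −x_M and u₁(x) = e^{−i r₊ x} + R₁ e^{i r₊ x} for all x ≥ x_M; u₂(x) = T₂ e^{−i r₋ x} for all x ≤ −x_M and u₂(x) = e^{i r₊ x} + R₂ e^{−i r₊ x} for all x ≥ x_M. Then R₁ R₂ = 1 and T₂ = T₁ R₂.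 -/
open Complex MeasureTheory
open scoped Classical

private lemma aux_ii {V : ℝ → ℝ} (hVmeas : Measurable V) {C : ℝ}
    (hC : ∀ x, |V x| ≤ C) (z : ℂ) {u : ℝ → ℂ} (hu : Continuous u) (a b : ℝ) :
    IntervalIntegrable (fun t => ((V t : ℂ) - z) * u t) volume a b := by
  obtain ⟨B, hB⟩ := (isCompact_uIcc (a := a) (b := b)).exists_bound_of_continuousOn
    hu.continuousOn
  rw [intervalIntegrable_iff]
  refine MeasureTheory.Integrable.mono' (g := fun _ => (C + ‖z‖) * B)
    (MeasureTheory.integrableOn_const measure_Ioc_lt_top.ne)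
    (((((Complex.measurable_ofReal.comp hVmeas).sub measurable_const).mul
      hu.measurable)).aestronglyMeasurable.restrict) ?_
  refine (MeasureTheory.ae_restrict_mem measurableSet_uIoc).mono fun t ht => ?_
  have h1 : ‖(V t : ℂ) - z‖ ≤ C + ‖z‖ := by
    calc ‖(V t : ℂ) - z‖ ≤ ‖(V t : ℂ)‖ + ‖z‖ := norm_sub_le _ _
    _ ≤ C + ‖z‖ := by
        have h := hC t
        have : ‖(V t : ℂ)‖ = |V t| := by
          rw [Complex.norm_real, Real.norm_eq_abs]
        rw [this]; linarith
  have h2 : ‖u t‖ ≤ B := hB t (Set.uIoc_subset_uIcc ht)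
  calc ‖((V t : ℂ) - z) * u t‖ = ‖(V t : ℂ) - z‖ * ‖u t‖ := norm_mul _ _
  _ ≤ (C + ‖z‖) * B := mul_le_mul h1 h2 (norm_nonneg _) (le_trans (norm_nonneg _) h1)

/-- Vanishing on a right half-line propagates to all of `ℝ`. -/
private lemma vanish_of_right {V : ℝ → ℝ} (hVmeas : Measurable V) {C : ℝ}
    (hC : ∀ x, |V x| ≤ C) {z : ℂ} {u : ℝ → ℂ} (hu : IsSolution V z u)
    {b : ℝ} (hb : ∀ x, b ≤ x → u x = 0) : ∀ x, u x = 0 := by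
  obtain ⟨hdiff, hcd, hint⟩ := hu
  have hucont : Continuous u := hdiff.continuous
  set K := C + ‖z‖ with hK
  have hK0 : (0:ℝ) ≤ K := add_nonneg (le_trans (abs_nonneg _) (hC 0)) (norm_nonneg _)
  set δ := min 1 (1/(2*(K+1))) with hδ
  have hδpos : 0 < δ := lt_min one_pos (by positivity)
  have hδ1 : δ ≤ 1 := min_le_left _ _
  have hδ2 : δ ≤ 1/(2*(K+1)) := min_le_right _ _
  have hδK : K * δ * δ ≤ 1/2 := by
    have e1 : K * δ ≤ K * (1/(2*(K+1))) := mul_le_mul_of_nonneg_left hδ2 hK0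
    have e2 : K * (1/(2*(K+1))) ≤ 1/2 := by
      rw [mul_one_div, div_le_iff₀ (by positivity)]
      linarith
    nlinarith [hδpos.le]
  have hg : ∀ a c : ℝ, IntervalIntegrable (fun t => ((V t : ℂ) - z) * u t) volume a c :=
    aux_ii hVmeas hC z hucont
  have hKb : ∀ t : ℝ, ‖(V t : ℂ) - z‖ ≤ K := by
    intro t
    calc ‖(V t : ℂ) - z‖ ≤ ‖(V t : ℂ)‖ + ‖z‖ := norm_sub_le _ _
    _ ≤ K := by
        have h := hC t
        have : ‖(V t : ℂ)‖ = |V t| := by rw [Complex.norm_real, Real.norm_eq_abs]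
        rw [hK, this]; linarith
  have step : ∀ c : ℝ, (∀ x, c ≤ x → u x = 0) → ∀ x, c - δ ≤ x → u x = 0 := by
    intro c hc
    have hd : ∀ x, c ≤ x → deriv u x = 0 := by
      have hopen : Set.EqOn (deriv u) (fun _ => (0:ℂ)) (Set.Ioi c) := by
        intro t ht
        have hev : u =ᶠ[nhds t] fun _ => (0:ℂ) :=
          Filter.eventually_of_mem (isOpen_Ioi.mem_nhds ht) fun s hs => hc s (le_of_lt hs)
        simp [hev.deriv_eq]
      have hcl : Set.EqOn (deriv u) (fun _ => (0:ℂ)) (Set.Ici c) := by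
        rw [← closure_Ioi]
        exact hopen.closure hcd continuous_const
      exact fun x hx => hcl hx
    have hne : (Set.Icc (c-δ) c).Nonempty := Set.nonempty_Icc.2 (by linarith)
    obtain ⟨x₀, hx₀, hmax⟩ := isCompact_Icc.exists_isMaxOn hne hucont.norm.continuousOn
    set M := ‖u x₀‖ with hMdef
    have hM0 : (0:ℝ) ≤ M := norm_nonneg _
    have hMb : ∀ t ∈ Set.Icc (c-δ) c, ‖u t‖ ≤ M := fun t ht => hmax ht
    have hder : ∀ x, x ≤ c → deriv u x = -∫ t in x..c, ((V t : ℂ) - z) * u t := by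
      intro x hx
      have h1 : deriv u x = deriv u c + ∫ t in c..x, ((V t : ℂ) - z) * u t := by
        rw [hint x, hint c, add_assoc,
          intervalIntegral.integral_add_adjacent_intervals (hg 0 c) (hg c x)]
      rw [h1, hd c le_rfl, zero_add, intervalIntegral.integral_symm]
    have hdb : ∀ x ∈ Set.Icc (c-δ) c, ‖deriv u x‖ ≤ K * M * δ := by
      intro x hx
      rw [hder x hx.2, norm_neg]
      have hb1 : ∀ t ∈ Set.uIoc x c, ‖((V t : ℂ) - z) * u t‖ ≤ K * M := by
        intro t ht
        rw [Set.uIoc_of_le hx.2] at ht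
        have htI : t ∈ Set.Icc (c-δ) c := ⟨le_trans hx.1 ht.1.le, ht.2⟩
        rw [norm_mul]
        exact mul_le_mul (hKb t) (hMb t htI) (norm_nonneg _) hK0
      calc ‖∫ t in x..c, ((V t : ℂ) - z) * u t‖ ≤ K * M * |c - x| :=
            intervalIntegral.norm_integral_le_of_norm_le_const hb1
      _ ≤ K * M * δ := by
          refine mul_le_mul_of_nonneg_left ?_ (mul_nonneg hK0 hM0)
          rw [_root_.abs_of_nonneg (by linarith [hx.2] : (0:ℝ) ≤ c - x)]
          linarith [hx.1]
    have hub : ∀ x ∈ Set.Icc (c-δ) c, ‖u x‖ ≤ K * M * δ * δ := by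
      intro x hx
      have hftc : ∫ t in x..c, deriv u t = u c - u x :=
        intervalIntegral.integral_deriv_eq_sub (fun t _ => hdiff t) (hcd.intervalIntegrable x c)
      have hux : u x = -∫ t in x..c, deriv u t := by
        rw [hftc, hc c le_rfl]; ring
      rw [hux, norm_neg]
      have hb2 : ∀ t ∈ Set.uIoc x c, ‖deriv u t‖ ≤ K * M * δ := by
        intro t ht
        rw [Set.uIoc_of_le hx.2] at ht
        exact hdb t ⟨le_trans hx.1 ht.1.le, ht.2⟩
      calc ‖∫ t in x..c, deriv u t‖ ≤ K * M * δ * |c - x| :=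
            intervalIntegral.norm_integral_le_of_norm_le_const hb2
      _ ≤ K * M * δ * δ := by
          refine mul_le_mul_of_nonneg_left ?_ (mul_nonneg (mul_nonneg hK0 hM0) hδpos.le)
          rw [_root_.abs_of_nonneg (by linarith [hx.2] : (0:ℝ) ≤ c - x)]
          linarith [hx.1]
    have hM : M = 0 := by
      have h1 := hub x₀ hx₀
      have h2 : K * M * δ * δ ≤ (1/2) * M := by nlinarith
      have h3 : M ≤ (1/2) * M := le_trans h1 h2
      linarith
    intro x hx
    rcases le_or_gt x c with h | h
    · have := hMb x ⟨hx, h⟩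
      rw [hM] at this
      exact norm_le_zero_iff.1 this
    · exact hc x h.le
  have hn : ∀ n : ℕ, ∀ x, b - n * δ ≤ x → u x = 0 := by
    intro n
    induction n with
    | zero => simpa using hb
    | succ n ih =>
        have h := step _ ih
        intro x hx
        refine h x ?_
        push_cast
        push_cast at hx
        linarith
  intro x
  obtain ⟨n, hn'⟩ := exists_nat_ge ((b - x)/δ)
  refine hn n x ?_
  have : b - x ≤ n * δ := by
    rw [div_le_iff₀ hδpos] at hn'
    linarith
  linarith

/-- Vanishing on a left half-line propagates to all of `ℝ`. -/
private lemma vanish_of_left {V : ℝ → ℝ} (hVmeas : Measurable V) {C : ℝ}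
    (hC : ∀ x, |V x| ≤ C) {z : ℂ} {u : ℝ → ℂ} (hu : IsSolution V z u)
    {b : ℝ} (hb : ∀ x, x ≤ b → u x = 0) : ∀ x, u x = 0 := by
  obtain ⟨hdiff, hcd, hint⟩ := hu
  have hucont : Continuous u := hdiff.continuous
  set K := C + ‖z‖ with hK
  have hK0 : (0:ℝ) ≤ K := add_nonneg (le_trans (abs_nonneg _) (hC 0)) (norm_nonneg _)
  set δ := min 1 (1/(2*(K+1))) with hδ
  have hδpos : 0 < δ := lt_min one_pos (by positivity)
  have hδ1 : δ ≤ 1 := min_le_left _ _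
  have hδ2 : δ ≤ 1/(2*(K+1)) := min_le_right _ _
  have hδK : K * δ * δ ≤ 1/2 := by
    have e1 : K * δ ≤ K * (1/(2*(K+1))) := mul_le_mul_of_nonneg_left hδ2 hK0
    have e2 : K * (1/(2*(K+1))) ≤ 1/2 := by
      rw [mul_one_div, div_le_iff₀ (by positivity)]
      linarith
    nlinarith [hδpos.le]
  have hg : ∀ a c : ℝ, IntervalIntegrable (fun t => ((V t : ℂ) - z) * u t) volume a c :=
    aux_ii hVmeas hC z hucont
  have hKb : ∀ t : ℝ, ‖(V t : ℂ) - z‖ ≤ K := by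
    intro t
    calc ‖(V t : ℂ) - z‖ ≤ ‖(V t : ℂ)‖ + ‖z‖ := norm_sub_le _ _
    _ ≤ K := by
        have h := hC t
        have : ‖(V t : ℂ)‖ = |V t| := by rw [Complex.norm_real, Real.norm_eq_abs]
        rw [hK, this]; linarith
  have step : ∀ c : ℝ, (∀ x, x ≤ c → u x = 0) → ∀ x, x ≤ c + δ → u x = 0 := by
    intro c hc
    have hd : ∀ x, x ≤ c → deriv u x = 0 := by
      have hopen : Set.EqOn (deriv u) (fun _ => (0:ℂ)) (Set.Iio c) := by
        intro t ht
        have hev : u =ᶠ[nhds t] fun _ => (0:ℂ) :=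
          Filter.eventually_of_mem (isOpen_Iio.mem_nhds ht) fun s hs => hc s (le_of_lt hs)
        simp [hev.deriv_eq]
      have hcl : Set.EqOn (deriv u) (fun _ => (0:ℂ)) (Set.Iic c) := by
        rw [← closure_Iio]
        exact hopen.closure hcd continuous_const
      exact fun x hx => hcl hx
    have hne : (Set.Icc c (c+δ)).Nonempty := Set.nonempty_Icc.2 (by linarith)
    obtain ⟨x₀, hx₀, hmax⟩ := isCompact_Icc.exists_isMaxOn hne hucont.norm.continuousOn
    set M := ‖u x₀‖ with hMdef
    have hM0 : (0:ℝ) ≤ M := norm_nonneg _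
    have hMb : ∀ t ∈ Set.Icc c (c+δ), ‖u t‖ ≤ M := fun t ht => hmax ht
    have hder : ∀ x, c ≤ x → deriv u x = ∫ t in c..x, ((V t : ℂ) - z) * u t := by
      intro x hx
      have h1 : deriv u x = deriv u c + ∫ t in c..x, ((V t : ℂ) - z) * u t := by
        rw [hint x, hint c, add_assoc,
          intervalIntegral.integral_add_adjacent_intervals (hg 0 c) (hg c x)]
      rw [h1, hd c le_rfl, zero_add]
    have hdb : ∀ x ∈ Set.Icc c (c+δ), ‖deriv u x‖ ≤ K * M * δ := by
      intro x hx
      rw [hder x hx.1]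
      have hb1 : ∀ t ∈ Set.uIoc c x, ‖((V t : ℂ) - z) * u t‖ ≤ K * M := by
        intro t ht
        rw [Set.uIoc_of_le hx.1] at ht
        have htI : t ∈ Set.Icc c (c+δ) := ⟨ht.1.le, le_trans ht.2 hx.2⟩
        rw [norm_mul]
        exact mul_le_mul (hKb t) (hMb t htI) (norm_nonneg _) hK0
      calc ‖∫ t in c..x, ((V t : ℂ) - z) * u t‖ ≤ K * M * |x - c| :=
            intervalIntegral.norm_integral_le_of_norm_le_const hb1
      _ ≤ K * M * δ := by
          refine mul_le_mul_of_nonneg_left ?_ (mul_nonneg hK0 hM0)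
          rw [_root_.abs_of_nonneg (by linarith [hx.1] : (0:ℝ) ≤ x - c)]
          linarith [hx.2]
    have hub : ∀ x ∈ Set.Icc c (c+δ), ‖u x‖ ≤ K * M * δ * δ := by
      intro x hx
      have hftc : ∫ t in c..x, deriv u t = u x - u c :=
        intervalIntegral.integral_deriv_eq_sub (fun t _ => hdiff t) (hcd.intervalIntegrable c x)
      have hux : u x = ∫ t in c..x, deriv u t := by
        rw [hftc, hc c le_rfl]; ring
      rw [hux]
      have hb2 : ∀ t ∈ Set.uIoc c x, ‖deriv u t‖ ≤ K * M * δ := by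
        intro t ht
        rw [Set.uIoc_of_le hx.1] at ht
        exact hdb t ⟨ht.1.le, le_trans ht.2 hx.2⟩
      calc ‖∫ t in c..x, deriv u t‖ ≤ K * M * δ * |x - c| :=
            intervalIntegral.norm_integral_le_of_norm_le_const hb2
      _ ≤ K * M * δ * δ := by
          refine mul_le_mul_of_nonneg_left ?_ (mul_nonneg (mul_nonneg hK0 hM0) hδpos.le)
          rw [_root_.abs_of_nonneg (by linarith [hx.1] : (0:ℝ) ≤ x - c)]
          linarith [hx.2]
    have hM : M = 0 := by
      have h1 := hub x₀ hx₀
      have h2 : K * M * δ * δ ≤ (1/2) * M := by nlinarith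
      have h3 : M ≤ (1/2) * M := le_trans h1 h2
      linarith
    intro x hx
    rcases le_or_gt c x with h | h
    · have := hMb x ⟨h, hx⟩
      rw [hM] at this
      exact norm_le_zero_iff.1 this
    · exact hc x h.le
  have hn : ∀ n : ℕ, ∀ x, x ≤ b + n * δ → u x = 0 := by
    intro n
    induction n with
    | zero => simpa using hb
    | succ n ih =>
        have h := step _ ih
        intro x hx
        refine h x ?_
        push_cast
        push_cast at hx
        linarith
  intro x
  obtain ⟨n, hn'⟩ := exists_nat_ge ((x - b)/δ)
  refine hn n x ?_
  have : x - b ≤ n * δ := by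
    rw [div_le_iff₀ hδpos] at hn'
    linarith
  linarith

private lemma isSolution_comb {V : ℝ → ℝ} (hVmeas : Measurable V) {C : ℝ}
    (hC : ∀ x, |V x| ≤ C) {z : ℂ} {u₁ u₂ : ℝ → ℂ}
    (h₁ : IsSolution V z u₁) (h₂ : IsSolution V z u₂) (a b : ℂ) :
    IsSolution V z (fun x => a * u₁ x - b * u₂ x) := by
  obtain ⟨hd₁, hc₁, hi₁⟩ := h₁
  obtain ⟨hd₂, hc₂, hi₂⟩ := h₂
  have hder : deriv (fun x => a * u₁ x - b * u₂ x) = fun x => a * deriv u₁ x - b * deriv u₂ x := by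
    funext x
    rw [deriv_fun_sub ((hd₁ x).const_mul a) ((hd₂ x).const_mul b),
      deriv_const_mul a (hd₁ x), deriv_const_mul b (hd₂ x)]
  refine ⟨(hd₁.const_mul a).sub (hd₂.const_mul b), ?_, ?_⟩
  · rw [hder]
    exact (continuous_const.mul hc₁).sub (continuous_const.mul hc₂)
  · intro x
    simp only [hder]
    rw [hi₁ x, hi₂ x]
    have hrw : ∀ t : ℝ, ((V t : ℂ) - z) * (a * u₁ t - b * u₂ t)
        = a * (((V t : ℂ) - z) * u₁ t) - b * (((V t : ℂ) - z) * u₂ t) := fun t => by ring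
    simp_rw [hrw]
    rw [intervalIntegral.integral_sub
      ((aux_ii hVmeas hC z hd₁.continuous 0 x).const_mul a)
      ((aux_ii hVmeas hC z hd₂.continuous 0 x).const_mul b),
      intervalIntegral.integral_const_mul, intervalIntegral.integral_const_mul]
    ring

private lemma hasDerivAt_cexp_mul (a : ℂ) (x : ℝ) :
    HasDerivAt (fun t : ℝ => Complex.exp (a * t)) (a * Complex.exp (a * x)) x := by
  have h1 : HasDerivAt (fun t : ℝ => a * (t : ℂ)) a x := by
    simpa using (Complex.ofRealCLM.hasDerivAt (x := x)).const_mul a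
  simpa [mul_comm] using h1.cexp

theorem reflection_product_relation
    (V : ℝ → ℝ) (Vp Vm xM : ℝ)
    (hVmeas : Measurable V) (hVbdd : ∃ C : ℝ, ∀ x : ℝ, |V x| ≤ C)
    (hxM : 0 < xM)
    (hVp : ∀ x : ℝ, xM < x → V x = Vp)
    (hVm : ∀ x : ℝ, x < -xM → V x = Vm)
    (z rp rm : ℂ) (hrp : rp ^ 2 = z - (Vp : ℂ)) (hrm : rm ^ 2 = z - (Vm : ℂ))
    (hrp0 : rp ≠ 0)
    (u₁ u₂ : ℝ → ℂ) (hu₁ : IsSolution V z u₁) (hu₂ : IsSolution V z u₂)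
    (T₁ R₁ T₂ R₂ : ℂ)
    (hu₁L : ∀ x : ℝ, x ≤ -xM → u₁ x = T₁ * Complex.exp (-(Complex.I * rm * x)))
    (hu₁R : ∀ x : ℝ, xM ≤ x →
      u₁ x = Complex.exp (-(Complex.I * rp * x)) + R₁ * Complex.exp (Complex.I * rp * x))
    (hu₂L : ∀ x : ℝ, x ≤ -xM → u₂ x = T₂ * Complex.exp (-(Complex.I * rm * x)))
    (hu₂R : ∀ x : ℝ, xM ≤ x →
      u₂ x = Complex.exp (Complex.I * rp * x) + R₂ * Complex.exp (-(Complex.I * rp * x))) :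
    R₁ * R₂ = 1 ∧ T₂ = T₁ * R₂ := by
  obtain ⟨C, hC⟩ := hVbdd
  set x₀ : ℝ := xM + 1 with hx₀def
  have hx₀R : xM ≤ x₀ := by linarith
  have hx₀lt : xM < x₀ := by linarith
  set E : ℂ := Complex.exp (Complex.I * rp * (x₀ : ℂ)) with hE
  set F : ℂ := Complex.exp (-(Complex.I * rp * (x₀ : ℂ))) with hF
  have hEne : E ≠ 0 := Complex.exp_ne_zero _
  have hFne : F ≠ 0 := Complex.exp_ne_zero _
  have hIrp : Complex.I * rp ≠ 0 := mul_ne_zero Complex.I_ne_zero hrp0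
  -- derivatives of the explicit right-hand formulas at x₀
  have hD1 : HasDerivAt (fun x : ℝ => Complex.exp (-(Complex.I * rp * (x : ℂ))))
      (-(Complex.I * rp * F)) x₀ := by
    have h := hasDerivAt_cexp_mul (-(Complex.I * rp)) x₀
    simpa [neg_mul, hF, mul_assoc] using h
  have hD2 : HasDerivAt (fun x : ℝ => Complex.exp (Complex.I * rp * (x : ℂ)))
      (Complex.I * rp * E) x₀ := by
    have h := hasDerivAt_cexp_mul (Complex.I * rp) x₀
    simpa [hE, mul_assoc] using h
  have hder₁ : deriv u₁ x₀ = -(Complex.I * rp * F) + R₁ * (Complex.I * rp * E) := by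
    have hev : u₁ =ᶠ[nhds x₀] (fun x : ℝ => Complex.exp (-(Complex.I * rp * (x : ℂ)))
        + R₁ * Complex.exp (Complex.I * rp * (x : ℂ))) :=
      Filter.eventually_of_mem (isOpen_Ioi.mem_nhds hx₀lt) fun t ht => hu₁R t (le_of_lt ht)
    rw [hev.deriv_eq]
    exact (hD1.add (hD2.const_mul R₁)).deriv
  have hder₂ : deriv u₂ x₀ = Complex.I * rp * E + R₂ * (-(Complex.I * rp * F)) := by
    have hev : u₂ =ᶠ[nhds x₀] (fun x : ℝ => Complex.exp (Complex.I * rp * (x : ℂ))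
        + R₂ * Complex.exp (-(Complex.I * rp * (x : ℂ)))) :=
      Filter.eventually_of_mem (isOpen_Ioi.mem_nhds hx₀lt) fun t ht => hu₂R t (le_of_lt ht)
    rw [hev.deriv_eq]
    exact (hD2.add (hD1.const_mul R₂)).deriv
  -- T₁ ≠ 0
  have hT₁ : T₁ ≠ 0 := by
    intro hT
    have hu₁0 : ∀ x, u₁ x = 0 :=
      vanish_of_left hVmeas hC hu₁ (b := -xM)
        (fun x hx => by rw [hu₁L x hx, hT, zero_mul])
    have hval : F + R₁ * E = 0 := by
      rw [← hu₁R x₀ hx₀R]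
      exact hu₁0 x₀
    have hdval : -(Complex.I * rp * F) + R₁ * (Complex.I * rp * E) = 0 := by
      rw [← hder₁]
      have : u₁ = fun _ => (0:ℂ) := funext hu₁0
      rw [this, deriv_const]
    have h3 : Complex.I * rp * (R₁ * E - F) = 0 := by linear_combination hdval
    have h4 : R₁ * E - F = 0 := by
      rcases mul_eq_zero.1 h3 with h | h
      · exact absurd h hIrp
      · exact h
    have h5 : (2:ℂ) * F = 0 := by linear_combination hval - h4
    have h6 : F = 0 := by
      have h2 : (2:ℂ) ≠ 0 := two_ne_zero
      exact (mul_eq_zero.1 h5).resolve_left h2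
    exact hFne h6
  -- w := T₂ u₁ - T₁ u₂ vanishes on the left, hence everywhere
  have hwL : ∀ x, x ≤ -xM → T₂ * u₁ x - T₁ * u₂ x = 0 := by
    intro x hx
    rw [hu₁L x hx, hu₂L x hx]
    ring
  have hw0 : ∀ x, T₂ * u₁ x - T₁ * u₂ x = 0 :=
    vanish_of_left hVmeas hC (isSolution_comb hVmeas hC hu₁ hu₂ T₂ T₁) (b := -xM) hwL
  -- equation from values at x₀
  have e1 : T₂ * (F + R₁ * E) = T₁ * (E + R₂ * F) := by
    rw [← hu₁R x₀ hx₀R, ← hu₂R x₀ hx₀R]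
    have := hw0 x₀
    linear_combination this
  -- equation from derivatives at x₀
  have hdw : T₂ * deriv u₁ x₀ - T₁ * deriv u₂ x₀ = 0 := by
    have h1 : deriv (fun x => T₂ * u₁ x - T₁ * u₂ x) x₀
        = T₂ * deriv u₁ x₀ - T₁ * deriv u₂ x₀ := by
      rw [deriv_fun_sub ((hu₁.1 x₀).const_mul T₂) ((hu₂.1 x₀).const_mul T₁),
        deriv_const_mul T₂ (hu₁.1 x₀), deriv_const_mul T₁ (hu₂.1 x₀)]
    have h2 : (fun x => T₂ * u₁ x - T₁ * u₂ x) = fun _ => (0:ℂ) := funext hw0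
    rw [← h1, h2, deriv_const]
  have e2 : T₂ * (-(Complex.I * rp * F) + R₁ * (Complex.I * rp * E))
      = T₁ * (Complex.I * rp * E + R₂ * (-(Complex.I * rp * F))) := by
    rw [← hder₁, ← hder₂]
    linear_combination hdw
  have e2' : T₂ * (R₁ * E - F) = T₁ * (E - R₂ * F) := by
    apply mul_left_cancel₀ hIrp
    linear_combination e2
  have t2 : T₂ = T₁ * R₂ := by
    have h := mul_right_cancel₀ hFne
      (show T₂ * F = (T₁ * R₂) * F by linear_combination (1/2 : ℂ) * e1 - (1/2 : ℂ) * e2')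
    exact h
  have t1 : T₂ * R₁ = T₁ := by
    exact mul_right_cancel₀ hEne
      (show (T₂ * R₁) * E = T₁ * E by linear_combination (1/2 : ℂ) * e1 + (1/2 : ℂ) * e2')
  refine ⟨?_, t2⟩
  apply mul_left_cancel₀ hT₁
  rw [mul_one]
  linear_combination t1 - R₁ * t2
end
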